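/- Let j ≥ 3 and let π be a permutation of {1,...,n} with all displacements π(i) − i in {−2, −1, j−2}. If r > 1 is the smallest index greater than 1 with displacement π(r) − r = j − 2, then r ≤ j; moreover π(i) − i = −1 for all 2 ≤ i ≤ r−1, and π(ℓ) − ℓ = −2 for all r+1 ≤ ℓ ≤ j. -/
import Mathlib


/-- Structure lemma for permutations with displacements in `{−2, −1, j−2}`.
Positions are `1`-indexed in the informal statement; here position `p` corresponds
to the index `p - 1` of `Fin n`. If `r > 1` is the smallest (1-indexed) position
with displacement `j − 2`, then `r ≤ j`, displacements at positions `2,…,r−1`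
(indices `1,…,r−2`) are all `−1`, and displacements at positions `r+1,…,j`
(indices `r,…,j−1`) are all `−2`. -/
theorem stmt7 (n j : ℕ) (hj : 3 ≤ j) (π : Equiv.Perm (Fin n))
    (hd : ∀ i : Fin n,
      (((π i : Fin n) : ℕ) : ℤ) - ((i : ℕ) : ℤ) ∈ ({-2, -1, (j : ℤ) - 2} : Set ℤ))
    (r : ℕ) (hr2 : 2 ≤ r) (hrn : r - 1 < n)
    (hr : (((π ⟨r - 1, hrn⟩ : Fin n) : ℕ) : ℤ) - ((r - 1 : ℕ) : ℤ) = (j : ℤ) - 2)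
    (hmin : ∀ i (hi : i < n), 1 ≤ i → i < r - 1 →
      (((π ⟨i, hi⟩ : Fin n) : ℕ) : ℤ) - (i : ℤ) ≠ (j : ℤ) - 2) :
    r ≤ j ∧
    (∀ i (hi : i < n), 1 ≤ i → i ≤ r - 2 →
      (((π ⟨i, hi⟩ : Fin n) : ℕ) : ℤ) - (i : ℤ) = -1) ∧
    (∀ i (hi : i < n), r ≤ i → i ≤ j - 1 →
      (((π ⟨i, hi⟩ : Fin n) : ℕ) : ℤ) - (i : ℤ) = -2) := by
  have h0n : 0 < n := lt_of_le_of_lt (Nat.zero_le _) hrn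
  -- displacement disjunction at a mk index
  have hd' : ∀ (i : ℕ) (hi : i < n),
      (((π ⟨i, hi⟩ : Fin n) : ℕ) : ℤ) = (i : ℤ) - 2 ∨
      (((π ⟨i, hi⟩ : Fin n) : ℕ) : ℤ) = (i : ℤ) - 1 ∨
      (((π ⟨i, hi⟩ : Fin n) : ℕ) : ℤ) = (i : ℤ) + (j : ℤ) - 2 := by
    intro i hi
    have h := hd ⟨i, hi⟩
    have hv : ((⟨i, hi⟩ : Fin n) : ℕ) = i := rfl
    rw [hv] at h
    simp only [Set.mem_insert_iff, Set.mem_singleton_iff] at h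
    omega
  -- Lemma A : π(0) = j - 2
  have hA : (((π ⟨0, h0n⟩ : Fin n) : ℕ) : ℤ) = (j : ℤ) - 2 := by
    have h := hd' 0 h0n
    omega
  -- Lemma B : indices 1 .. r-2 have displacement -1
  have hB : ∀ i (hi : i < n), 1 ≤ i → i ≤ r - 2 →
      (((π ⟨i, hi⟩ : Fin n) : ℕ) : ℤ) - (i : ℤ) = -1 := by
    intro i
    induction i using Nat.strong_induction_on with
    | _ i ih =>
      intro hi h1 h2
      have hne := hmin i hi h1 (by omega)
      rcases hd' i hi with h | h | h
      · -- displacement -2 : impossible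
        by_cases hi1 : i = 1
        · subst hi1; omega
        · have hin : i - 1 < n := by omega
          have hprev := ih (i - 1) (by omega) hin (by omega) (by omega)
          have hval : ((π ⟨i - 1, hin⟩ : Fin n) : ℕ) = ((π ⟨i, hi⟩ : Fin n) : ℕ) := by
            omega
          have heq : (⟨i - 1, hin⟩ : Fin n) = ⟨i, hi⟩ := π.injective (Fin.ext hval)
          simp only [Fin.mk.injEq] at heq
          omega
      · omega
      · omega
  -- Claim 1 : r ≤ j
  have hC1 : r ≤ j := by
    by_contra hlt
    push_neg at hlt
    have hj1 : j - 1 < n := by omega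
    have hB1 := hB (j - 1) hj1 (by omega) (by omega)
    have hval : ((π ⟨0, h0n⟩ : Fin n) : ℕ) = ((π ⟨j - 1, hj1⟩ : Fin n) : ℕ) := by omega
    have heq : (⟨0, h0n⟩ : Fin n) = ⟨j - 1, hj1⟩ := π.injective (Fin.ext hval)
    simp only [Fin.mk.injEq] at heq
    omega
  -- Claim 3 : indices r .. j-1 have displacement -2
  have hC3 : ∀ i (hi : i < n), r ≤ i → i ≤ j - 1 →
      (((π ⟨i, hi⟩ : Fin n) : ℕ) : ℤ) - (i : ℤ) = -2 := by
    intro i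
    induction i using Nat.strong_induction_on with
    | _ i ih =>
      intro hi hri hij
      have hv : i - 2 < n := by omega
      obtain ⟨a, hpa⟩ : ∃ a : Fin n, π a = ⟨i - 2, hv⟩ :=
        ⟨π.symm ⟨i - 2, hv⟩, π.apply_symm_apply _⟩
      have hda := hd' (a : ℕ) a.2
      have hetaa : (⟨(a : ℕ), a.2⟩ : Fin n) = a := rfl
      rw [hetaa, hpa] at hda
      have hvv : ((⟨i - 2, hv⟩ : Fin n) : ℕ) = i - 2 := rfl
      rw [hvv] at hda
      rcases hda with h | h | h
      · -- a = i
        have haa : a = ⟨i, hi⟩ := Fin.ext (show (a : ℕ) = i by omega)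
        rw [haa] at hpa
        have hgoal := congrArg Fin.val hpa
        have hvv2 : ((⟨i - 2, hv⟩ : Fin n) : ℕ) = i - 2 := rfl
        rw [hvv2] at hgoal
        omega
      · -- a = i - 1
        by_cases hir : i = r
        · have haa : a = ⟨r - 1, hrn⟩ := Fin.ext (show (a : ℕ) = r - 1 by omega)
          rw [haa] at hpa
          have hgoal := congrArg Fin.val hpa
          have hvv2 : ((⟨i - 2, hv⟩ : Fin n) : ℕ) = i - 2 := rfl
          rw [hvv2] at hgoal
          omega
        · have hin : i - 1 < n := by omega
          have hprev := ih (i - 1) (by omega) hin (by omega) (by omega)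
          have haa : a = ⟨i - 1, hin⟩ := Fin.ext (show (a : ℕ) = i - 1 by omega)
          rw [haa] at hpa
          have hgoal := congrArg Fin.val hpa
          have hvv2 : ((⟨i - 2, hv⟩ : Fin n) : ℕ) = i - 2 := rfl
          rw [hvv2] at hgoal
          omega
      · -- a = i - j < 0 : impossible
        omega
  exact ⟨hC1, hB, hC3⟩
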